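/- Let μ be a finite positive Borel measure on the closed unit disk with μ ≠ 0 satisfying the moment relations μ(closure 𝔻)·∫ zⁿ·conj(z)^m dμ(z) = (∫ zⁿ dμ)·(∫ conj(z)^m dμ) for all integers m, n ≥ 0. Then μ = c·δ_ζ for some c > 0 and some ζ in the closed unit disk; moreover ζ = (∫ z dμ)/μ(closure 𝔻). -/

import Mathlib

open Complex Metric MeasureTheory
open scoped ENNReal

/-- A nonzero finite positive Borel measure on the closed unit disk satisfying the
moment relations `μ(𝔻̄)·∫ zⁿ conj(z)^m dμ = (∫ zⁿ dμ)(∫ conj(z)^m dμ)` for all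
`m, n ≥ 0` is a positive multiple of a Dirac measure `δ_ζ` with
`ζ = (∫ z dμ)/μ(𝔻̄)` in the closed unit disk. -/
theorem stmt_2 (μ : Measure ℂ) [IsFiniteMeasure μ] (hne : μ ≠ 0)
    (hsupp : μ (closedBall (0 : ℂ) 1)ᶜ = 0)
    (hmom : ∀ m n : ℕ,
      ((μ Set.univ).toReal : ℂ) * ∫ z, z ^ n * ((starRingEnd ℂ) z) ^ m ∂μ
        = (∫ z, z ^ n ∂μ) * ∫ z, ((starRingEnd ℂ) z) ^ m ∂μ) :
    ∃ c : ℝ≥0∞, 0 < c ∧ c ≠ ⊤ ∧ ∃ ζ ∈ closedBall (0 : ℂ) 1,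
      μ = c • Measure.dirac ζ ∧ ζ = (∫ z, z ∂μ) / ((μ Set.univ).toReal : ℂ) := by
  have hMne : μ Set.univ ≠ 0 := by
    simpa [Measure.measure_univ_ne_zero] using hne
  have hMtop : μ Set.univ ≠ ⊤ := measure_ne_top μ _
  set M : ℝ := (μ Set.univ).toReal with hMdef
  have hMpos : 0 < M := ENNReal.toReal_pos hMne hMtop
  have hMC : (M : ℂ) ≠ 0 := by exact_mod_cast hMpos.ne'
  -- a.e. bound
  have hmem : ∀ᵐ z ∂μ, z ∈ closedBall (0 : ℂ) 1 := by
    rw [ae_iff]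
    exact hsupp
  have hb : ∀ᵐ z ∂μ, ‖z‖ ≤ 1 := hmem.mono fun z hz => mem_closedBall_zero_iff.mp hz
  -- integrability
  have hint_id : Integrable (fun z : ℂ => z) μ :=
    (integrable_const (1 : ℝ)).mono' measurable_id.aestronglyMeasurable
      (hb.mono fun z hz => by simpa using hz)
  have hint_conj : Integrable (fun z : ℂ => (starRingEnd ℂ) z) μ :=
    (integrable_const (1 : ℝ)).mono'
      Complex.continuous_conj.measurable.aestronglyMeasurable
      (hb.mono fun z hz => by simpa using hz)
  have hint_mul : Integrable (fun z : ℂ => z * (starRingEnd ℂ) z) μ :=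
    (integrable_const (1 : ℝ)).mono'
      (continuous_id.mul Complex.continuous_conj).measurable.aestronglyMeasurable
      (hb.mono fun z hz => by
        simp only [norm_mul]
        calc ‖z‖ * ‖(starRingEnd ℂ) z‖ = ‖z‖ * ‖z‖ := by rw [RCLike.norm_conj]
          _ ≤ 1 * 1 := mul_le_mul hz hz (norm_nonneg _) zero_le_one
          _ = 1 := one_mul 1)
  -- key moment identity
  set I : ℂ := ∫ z, z ∂μ with hIdef
  have hconj : (∫ z, (starRingEnd ℂ) z ∂μ) = (starRingEnd ℂ) I := integral_conj
  have key := hmom 1 1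
  simp only [pow_one] at key
  rw [hconj] at key
  -- here key : (M : ℂ) * ∫ z, z * conj z ∂μ = I * conj I
  set ζ : ℂ := I / (M : ℂ) with hζdef
  have hζconj : (starRingEnd ℂ) ζ = (starRingEnd ℂ) I / (M : ℂ) := by
    rw [hζdef, map_div₀, Complex.conj_ofReal]
  -- the second moment around ζ vanishes
  have hfun : (fun z : ℂ => (z - ζ) * (starRingEnd ℂ) (z - ζ))
      = fun z : ℂ => z * (starRingEnd ℂ) z - (starRingEnd ℂ) ζ * z
        - ζ * (starRingEnd ℂ) z + ζ * (starRingEnd ℂ) ζ := by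
    funext z
    simp only [map_sub]
    ring
  have h2 : Integrable (fun z : ℂ => (starRingEnd ℂ) ζ * z) μ := hint_id.const_mul _
  have h3 : Integrable (fun z : ℂ => ζ * (starRingEnd ℂ) z) μ := hint_conj.const_mul _
  have hint_big : Integrable (fun z : ℂ => (z - ζ) * (starRingEnd ℂ) (z - ζ)) μ := by
    rw [hfun]
    exact ((hint_mul.sub h2).sub h3).add (integrable_const _)
  have hA : Integrable (fun z : ℂ => z * (starRingEnd ℂ) z - (starRingEnd ℂ) ζ * z) μ :=
    hint_mul.sub h2
  have hB : Integrable
      (fun z : ℂ => z * (starRingEnd ℂ) z - (starRingEnd ℂ) ζ * z - ζ * (starRingEnd ℂ) z) μ :=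
    hA.sub h3
  have hI2 : ∫ z, (z - ζ) * (starRingEnd ℂ) (z - ζ) ∂μ = 0 := by
    rw [hfun, integral_add hB (integrable_const _),
      integral_sub hA h3, integral_sub hint_mul h2,
      integral_const_mul, integral_const_mul, integral_const, hconj]
    rw [← hIdef, measureReal_def, ← hMdef, Complex.real_smul]
    have hkey : (∫ z, z * (starRingEnd ℂ) z ∂μ) = I * (starRingEnd ℂ) I / (M : ℂ) := by
      rw [eq_div_iff hMC]
      linear_combination key
    rw [hkey, hζdef, hζconj]
    field_simp
    ring
  -- pass to real parts
  have hre : ∫ z, ‖z - ζ‖ ^ 2 ∂μ = 0 := by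
    have h1 : ∫ z, ((‖z - ζ‖ ^ 2 : ℝ) : ℂ) ∂μ = ((∫ z, ‖z - ζ‖ ^ 2 ∂μ : ℝ) : ℂ) :=
      integral_ofReal
    have h0 : ∫ z, ((‖z - ζ‖ ^ 2 : ℝ) : ℂ) ∂μ = 0 := by
      rw [← hI2]
      congr 1
      funext z
      rw [Complex.mul_conj]
      congr 1
      rw [Complex.normSq_eq_norm_sq]
    rw [h1] at h0
    exact_mod_cast h0
  have hint_sq : Integrable (fun z : ℂ => ‖z - ζ‖ ^ 2) μ :=
    (integrable_const ((1 + ‖ζ‖) ^ 2)).mono'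
      ((continuous_id.sub continuous_const).norm.pow 2).aestronglyMeasurable
      (hb.mono fun z hz => by
        have h1 : ‖z - ζ‖ ≤ 1 + ‖ζ‖ := (norm_sub_le _ _).trans (by linarith)
        have h2' : ‖z - ζ‖ ^ 2 ≤ (1 + ‖ζ‖) ^ 2 := by
          nlinarith [norm_nonneg (z - ζ), norm_nonneg ζ]
        simpa [Real.norm_eq_abs, _root_.abs_of_nonneg (sq_nonneg ‖z - ζ‖)] using h2')
  have hae : ∀ᵐ z ∂μ, z = ζ := by
    have h0 : ∀ᵐ z ∂μ, ‖z - ζ‖ ^ 2 = 0 := by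
      have := (integral_eq_zero_iff_of_nonneg (fun z => by positivity) hint_sq).mp hre
      filter_upwards [this] with z hz using hz
    filter_upwards [h0] with z hz
    have : ‖z - ζ‖ = 0 := by
      nlinarith [norm_nonneg (z - ζ)]
    rw [norm_eq_zero, sub_eq_zero] at this
    exact this
  -- ζ is in the closed ball
  haveI : (ae μ).NeBot := ae_neBot.mpr hne
  obtain ⟨w, hw1, hw2⟩ := (hae.and hmem).exists
  have hζmem : ζ ∈ closedBall (0 : ℂ) 1 := hw1 ▸ hw2
  -- μ is a multiple of the dirac measure
  have hcompl : μ {ζ}ᶜ = 0 := by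
    rw [ae_iff] at hae
    exact hae
  have hμ : μ = μ Set.univ • Measure.dirac ζ := by
    ext s hs
    rw [Measure.smul_apply, Measure.dirac_apply' _ hs, smul_eq_mul]
    have hsplit : μ (s ∩ {ζ}) + μ (s \ {ζ}) = μ s :=
      measure_inter_add_diff s (measurableSet_singleton ζ)
    have hdiff : μ (s \ {ζ}) = 0 :=
      measure_mono_null (fun x hx => hx.2) hcompl
    by_cases hζs : ζ ∈ s
    · have h1 : s ∩ {ζ} = {ζ} := Set.inter_eq_right.mpr (Set.singleton_subset_iff.mpr hζs)
      have h2 : μ {ζ} = μ Set.univ := by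
        have := measure_add_measure_compl (μ := μ) (measurableSet_singleton ζ)
        rw [hcompl, add_zero] at this
        exact this
      rw [← hsplit, h1, hdiff, add_zero, h2, Set.indicator_of_mem hζs]
      simp
    · have h1 : s ∩ {ζ} = ∅ := by
        ext x
        simp only [Set.mem_inter_iff, Set.mem_singleton_iff, Set.mem_empty_iff_false, iff_false]
        rintro ⟨hxs, rfl⟩
        exact hζs hxs
      rw [← hsplit, h1, hdiff, measure_empty, add_zero, Set.indicator_of_notMem hζs]
      simp
  exact ⟨μ Set.univ, hMne.bot_lt, hMtop, ζ, hζmem, hμ, rfl⟩
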